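/- Let U be the 2×2 diagonal unitary with diagonal entries e^{iπ/4} and e^{−iπ/4} (i.e., U = e^{iπZ/4}), and let P = |+⟩⟨+| be the rank-one projection onto (1/√2)(1,1) ∈ ℂ². Then the vectors U(1/√2)(1,1) and Uᴴ(1/√2)(1,1) are orthogonal, and (1/2)‖U P Uᴴ − Uᴴ P U‖₁ = 1. -/

import Mathlib

open Matrix ComplexOrder

noncomputable def traceNorm {n : Type*} [Fintype n] [DecidableEq n]
    (A : Matrix n n ℂ) : ℝ :=
  (((Matrix.posSemidef_conjTranspose_mul_self A).1.eigenvectorUnitary.1 *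
      diagonal ((fun x : ℝ => (x : ℂ)) ∘ (Real.sqrt ·) ∘ (Matrix.posSemidef_conjTranspose_mul_self A).1.eigenvalues) *
      (star (Matrix.posSemidef_conjTranspose_mul_self A).1.eigenvectorUnitary : Matrix n n ℂ)).trace).re

noncomputable def ketbra {d : ℕ} (ψ : Fin d → ℂ) : Matrix (Fin d) (Fin d) ℂ :=
  fun i j => ψ i * (starRingEnd ℂ) (ψ j)

noncomputable def kronPow {d : ℕ} (M : Matrix (Fin d) (Fin d) ℂ) (k : ℕ) :
    Matrix (Fin k → Fin d) (Fin k → Fin d) ℂ :=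
  fun i j => ∏ t : Fin k, M (i t) (j t)

noncomputable def fid {d : ℕ} (ψ : Fin d → ℂ) (σ : Matrix (Fin d) (Fin d) ℂ) : ℝ :=
  (∑ i, ∑ j, (starRingEnd ℂ) (ψ i) * σ i j * ψ j).re

/-- The explicit counterexample of Theorem 4: U|+⟩ and Uᴴ|+⟩ are orthogonal
for U = e^{iπZ/4}, and the corresponding pure states are at trace distance 1. -/
theorem counterexample_notblind :
    letI U : Matrix (Fin 2) (Fin 2) ℂ :=
      Matrix.diagonal ![Complex.exp (Complex.I * (Real.pi / 4)),
        Complex.exp (-(Complex.I * (Real.pi / 4)))]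
    letI plus : Fin 2 → ℂ := ![((Real.sqrt 2 : ℝ) : ℂ)⁻¹, ((Real.sqrt 2 : ℝ) : ℂ)⁻¹]
    (∑ i, (starRingEnd ℂ) (U.mulVec plus i) * (Uᴴ.mulVec plus i) = 0) ∧
      (1 / 2 : ℝ) * traceNorm (U * ketbra plus * Uᴴ - Uᴴ * ketbra plus * U) = 1 := by
  set e : ℂ := Complex.exp (Complex.I * (Real.pi / 4)) with he_def
  set f : ℂ := Complex.exp (-(Complex.I * (Real.pi / 4))) with hf_def
  set s : ℂ := ((Real.sqrt 2 : ℝ) : ℂ)⁻¹ with hs_def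
  have hee : e * e = Complex.I := by
    rw [he_def, ← Complex.exp_add]
    have : Complex.I * (Real.pi / 4) + Complex.I * (Real.pi / 4)
        = (Real.pi / 2 : ℂ) * Complex.I := by ring
    rw [this, Complex.exp_mul_I]
    simp
  have hff : f * f = -Complex.I := by
    rw [hf_def, ← Complex.exp_add]
    have : -(Complex.I * (Real.pi / 4)) + -(Complex.I * (Real.pi / 4))
        = (-(Real.pi / 2) : ℂ) * Complex.I := by ring
    rw [this, Complex.exp_mul_I]
    simp
  have hce : (starRingEnd ℂ) e = f := by
    rw [he_def, hf_def, ← Complex.exp_conj]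
    congr 1
    simp [_root_.map_mul, map_div₀, Complex.conj_I, Complex.conj_ofReal, map_ofNat]
  have hcf : (starRingEnd ℂ) f = e := by
    rw [he_def, hf_def, ← Complex.exp_conj]
    congr 1
    simp [_root_.map_mul, map_div₀, Complex.conj_I, Complex.conj_ofReal, map_ofNat]
  have hcs : (starRingEnd ℂ) s = s := by
    simp [hs_def, map_inv₀, Complex.conj_ofReal]
  set U : Matrix (Fin 2) (Fin 2) ℂ := Matrix.diagonal ![e, f] with hU_def
  set plus : Fin 2 → ℂ := ![s, s] with hplus_def
  have hs2 : s * s = 1 / 2 := by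
    rw [hs_def, ← mul_inv]
    norm_cast
    rw [Real.mul_self_sqrt (by norm_num)]
    norm_num
  clear_value e f s U plus
  constructor
  · simp only [hU_def, hplus_def, Matrix.mulVec, dotProduct, Fin.sum_univ_two,
      Matrix.conjTranspose_apply, Matrix.diagonal_apply, Matrix.cons_val_zero,
      Matrix.cons_val_one, Matrix.head_cons]
    simp [← he_def, ← hf_def, ← hs_def, hce, hcf, hcs]
    linear_combination s * s * hff + s * s * hee
  · set D : Matrix (Fin 2) (Fin 2) ℂ := U * ketbra plus * Uᴴ - Uᴴ * ketbra plus * U with hD_def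
    have hDval : D = !![0, Complex.I; -Complex.I, 0] := by
      ext i j
      fin_cases i <;> fin_cases j <;>
        simp [hD_def, hU_def, hplus_def, ketbra, Matrix.mul_apply, Fin.sum_univ_two,
          Matrix.diagonal_apply, Matrix.conjTranspose_apply,
          hce, hcf, hcs] <;>
        (first
          | linear_combination s * s * hee - s * s * hff + 2 * Complex.I * hs2
          | linear_combination s * s * hff - s * s * hee - 2 * Complex.I * hs2
          | ring)
    have hDD : Dᴴ * D = 1 := by
      rw [hDval]
      ext i j
      fin_cases i <;> fin_cases j <;>
        simp [Matrix.mul_apply, Fin.sum_univ_two, Matrix.conjTranspose_apply,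
          Matrix.one_apply, Complex.I_mul_I]
    have hdiag : diagonal (RCLike.ofReal ∘
        (Matrix.posSemidef_conjTranspose_mul_self D).1.eigenvalues) = (1 : Matrix (Fin 2) (Fin 2) ℂ) := by
      rw [← (Matrix.posSemidef_conjTranspose_mul_self D).1.conjStarAlgAut_star_eigenvectorUnitary]
      exact (congrArg (Unitary.conjStarAlgAut ℂ _
        (star (Matrix.posSemidef_conjTranspose_mul_self D).1.eigenvectorUnitary)) hDD).trans (map_one _)
    have heig : ∀ i, (Matrix.posSemidef_conjTranspose_mul_self D).1.eigenvalues i = 1 := by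
      intro i
      have := congrFun (congrFun hdiag i) i
      simpa using this
    show (1 / 2 : ℝ) * traceNorm D = 1
    rw [traceNorm, Matrix.trace_mul_cycle, Unitary.coe_star_mul_self, one_mul, trace_diagonal]
    simp [heig]
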